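/- For every integer p ≥ 1 and all real (v,u): ∂²θ_{1,p}/∂u² = e^u·∂θ_{1,p−1}/∂v, ∂²θ_{1,p}/∂u∂v = ∂θ_{1,p−1}/∂u, and ∂²θ_{1,p}/∂v² = ∂θ_{1,p−1}/∂v, i.e. the functions θ_{1,p} satisfy the deformed flatness recursion ∂²θ_{1,p}/∂w^β∂w^γ = c^ξ_{βγ}·∂θ_{1,p−1}/∂w^ξ determined by the Frobenius potential F = (1/2)v²u + e^u. -/

import Mathlib

/-!
The dispersionless Hamiltonian densities `θ_{α,p}(v,u)` of the extended Toda
hierarchy and their partial derivatives.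
-/

noncomputable section Toda

/-- The harmonic number `H_m = Σ_{j=1}^m 1/j`. -/
def harm (m : ℕ) : ℝ := ∑ j ∈ Finset.Icc 1 m, (1 : ℝ) / (j : ℝ)

/-- `θ_{2,p}(v,u) = Σ_{2m ≤ p+1} e^{mu} v^{p+1−2m} / ((m!)² (p+1−2m)!)`. -/
def theta2 (p : ℕ) (v u : ℝ) : ℝ :=
  ∑ m ∈ Finset.range ((p + 1) / 2 + 1),
    Real.exp (m * u) * v ^ (p + 1 - 2 * m) /
      ((Nat.factorial m : ℝ) ^ 2 * (Nat.factorial (p + 1 - 2 * m) : ℝ))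

/-- `θ_{1,p}(v,u) = −2 Σ_{2m ≤ p} (H_m − u/2) e^{mu} v^{p−2m} / ((m!)² (p−2m)!)`. -/
def theta1 (p : ℕ) (v u : ℝ) : ℝ :=
  -2 * ∑ m ∈ Finset.range (p / 2 + 1),
    (harm m - u / 2) * Real.exp (m * u) * v ^ (p - 2 * m) /
      ((Nat.factorial m : ℝ) ^ 2 * (Nat.factorial (p - 2 * m) : ℝ))

/-- Partial derivative in the first variable `v`. -/
def dv (f : ℝ → ℝ → ℝ) (v u : ℝ) : ℝ := deriv (fun v' => f v' u) v

/-- Partial derivative in the second variable `u`. -/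
def du (f : ℝ → ℝ → ℝ) (v u : ℝ) : ℝ := deriv (fun u' => f v u') u

lemma harm_succ (k : ℕ) : harm (k+1) = harm k + 1/((k:ℝ)+1) := by
  unfold harm
  rw [Finset.sum_Icc_succ_top (by omega : 1 ≤ k+1)]
  push_cast; ring

lemma hasDerivAt_theta1_v (p : ℕ) (u v : ℝ) :
    HasDerivAt (fun v' => theta1 p v' u)
      (-2 * ∑ m ∈ Finset.range (p / 2 + 1),
        (harm m - u / 2) * Real.exp (m * u) * ((p - 2*m : ℕ) * v ^ (p - 2*m - 1)) /
          ((Nat.factorial m : ℝ) ^ 2 * (Nat.factorial (p - 2 * m) : ℝ))) v := by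
  unfold theta1
  exact (HasDerivAt.fun_sum fun m _ =>
    ((hasDerivAt_pow (p - 2*m) v).const_mul ((harm m - u / 2) * Real.exp (m * u))).div_const
      _).const_mul (-2)

lemma term_dv (m n : ℕ) (hn : 1 ≤ n) (C v : ℝ) :
    C * ((n:ℝ) * v ^ (n - 1)) / ((Nat.factorial m : ℝ)^2 * (Nat.factorial n : ℝ))
    = C * v ^ (n - 1) / ((Nat.factorial m : ℝ)^2 * (Nat.factorial (n-1) : ℝ)) := by
  obtain ⟨k, rfl⟩ : ∃ k, n = k + 1 := ⟨n - 1, by omega⟩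
  rw [Nat.factorial_succ]
  have hm : (Nat.factorial m : ℝ) ≠ 0 := Nat.cast_ne_zero.2 m.factorial_ne_zero
  have hk : (Nat.factorial k : ℝ) ≠ 0 := Nat.cast_ne_zero.2 k.factorial_ne_zero
  have hk1 : ((k:ℝ) + 1) ≠ 0 := by positivity
  simp only [Nat.add_sub_cancel]
  push_cast
  field_simp

lemma sum_shift (p : ℕ) (hp : 1 ≤ p) (v : ℝ) (C : ℕ → ℝ) :
    ∑ m ∈ Finset.range (p / 2 + 1),
      C m * ((p - 2*m : ℕ) * v ^ (p - 2*m - 1)) /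
        ((Nat.factorial m : ℝ)^2 * (Nat.factorial (p-2*m) : ℝ))
    = ∑ m ∈ Finset.range ((p-1) / 2 + 1),
      C m * v ^ (p - 1 - 2*m) /
        ((Nat.factorial m : ℝ)^2 * (Nat.factorial (p-1-2*m) : ℝ)) := by
  rcases Nat.even_or_odd p with he | ho
  · have hmod : p % 2 = 0 := Nat.even_iff.mp he
    have hr : p / 2 + 1 = ((p-1)/2 + 1) + 1 := by omega
    rw [hr, Finset.sum_range_succ]
    have hz : p - 2 * ((p-1)/2 + 1) = 0 := by omega
    rw [hz]
    simp only [Nat.cast_zero, zero_mul, mul_zero, zero_div, add_zero, Nat.zero_sub, pow_zero]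
    refine Finset.sum_congr rfl fun m hm => ?_
    have hm' := Finset.mem_range.mp hm
    have h1 : 1 ≤ p - 2*m := by omega
    rw [term_dv m (p - 2*m) h1 (C m) v, show p - 2*m - 1 = p - 1 - 2*m from by omega]
  · have hmod : p % 2 = 1 := Nat.odd_iff.mp ho
    rw [show p / 2 = (p-1)/2 from by omega]
    refine Finset.sum_congr rfl fun m hm => ?_
    have hm' := Finset.mem_range.mp hm
    have h1 : 1 ≤ p - 2*m := by omega
    rw [term_dv m (p - 2*m) h1 (C m) v, show p - 2*m - 1 = p - 1 - 2*m from by omega]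

lemma dv_theta1 (p : ℕ) (hp : 1 ≤ p) (v u : ℝ) :
    dv (theta1 p) v u = theta1 (p-1) v u := by
  rw [dv, (hasDerivAt_theta1_v p u v).deriv]
  unfold theta1
  congr 1
  exact sum_shift p hp v fun m => (harm m - u/2) * Real.exp (m*u)

def T1 (p : ℕ) (v u : ℝ) : ℝ :=
  -2 * ∑ m ∈ Finset.range (p / 2 + 1),
    ((m:ℝ) * (harm m - u / 2) - 1/2) * Real.exp ((m:ℝ) * u) * v ^ (p - 2 * m) /
      ((Nat.factorial m : ℝ) ^ 2 * (Nat.factorial (p - 2*m) : ℝ))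

lemma hasDerivAt_term_u (m n : ℕ) (v d u : ℝ) :
    HasDerivAt (fun u' => (harm m - u' / 2) * Real.exp ((m:ℝ) * u') * v ^ n / d)
      (((m:ℝ) * (harm m - u / 2) - 1/2) * Real.exp ((m:ℝ) * u) * v ^ n / d) u := by
  have h1 : HasDerivAt (fun u' : ℝ => harm m - u' / 2) (-(1/2) : ℝ) u := by
    simpa using ((hasDerivAt_id u).div_const 2).const_sub (harm m)
  have h2 : HasDerivAt (fun u' : ℝ => Real.exp ((m:ℝ) * u')) (Real.exp ((m:ℝ) * u) * (m:ℝ)) u := by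
    simpa using ((hasDerivAt_id u).const_mul (m:ℝ)).exp
  have h3 := ((h1.fun_mul h2).mul_const (v ^ n)).div_const d
  refine h3.congr_deriv ?_
  ring

lemma hasDerivAt_term_u2 (m n : ℕ) (v d u : ℝ) :
    HasDerivAt (fun u' => ((m:ℝ) * (harm m - u' / 2) - 1/2) * Real.exp ((m:ℝ) * u') * v ^ n / d)
      ((m:ℝ) * ((m:ℝ) * (harm m - u / 2) - 1) * Real.exp ((m:ℝ) * u) * v ^ n / d) u := by
  have h1 : HasDerivAt (fun u' : ℝ => (m:ℝ) * (harm m - u' / 2) - 1/2) (-((m:ℝ)/2)) u := by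
    have := ((((hasDerivAt_id u).div_const 2).const_sub (harm m)).const_mul (m:ℝ)).sub_const
      (1/2 : ℝ)
    refine this.congr_deriv ?_
    ring
  have h2 : HasDerivAt (fun u' : ℝ => Real.exp ((m:ℝ) * u')) (Real.exp ((m:ℝ) * u) * (m:ℝ)) u := by
    simpa using ((hasDerivAt_id u).const_mul (m:ℝ)).exp
  have h3 := ((h1.fun_mul h2).mul_const (v ^ n)).div_const d
  refine h3.congr_deriv ?_
  ring

lemma hasDerivAt_theta1_u (p : ℕ) (v u : ℝ) :
    HasDerivAt (fun u' => theta1 p v u') (T1 p v u) u := by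
  unfold theta1 T1
  exact (HasDerivAt.fun_sum fun m _ => hasDerivAt_term_u m (p - 2*m) v _ u).const_mul (-2)

lemma hasDerivAt_T1_u (p : ℕ) (v u : ℝ) :
    HasDerivAt (fun u' => T1 p v u')
      (-2 * ∑ m ∈ Finset.range (p/2+1),
        (m:ℝ) * ((m:ℝ) * (harm m - u / 2) - 1) * Real.exp ((m:ℝ) * u) * v ^ (p - 2*m) /
          ((Nat.factorial m : ℝ)^2 * (Nat.factorial (p - 2*m) : ℝ))) u := by
  unfold T1
  exact (HasDerivAt.fun_sum fun m _ => hasDerivAt_term_u2 m (p - 2*m) v _ u).const_mul (-2)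

lemma sum2_eq (p : ℕ) (hp : 2 ≤ p) (v u : ℝ) :
    -2 * ∑ m ∈ Finset.range (p/2+1),
        (m:ℝ) * ((m:ℝ) * (harm m - u / 2) - 1) * Real.exp ((m:ℝ) * u) * v ^ (p - 2*m) /
          ((Nat.factorial m : ℝ)^2 * (Nat.factorial (p - 2*m) : ℝ))
    = Real.exp u * theta1 (p-2) v u := by
  unfold theta1
  rw [Finset.sum_range_succ']
  simp only [Nat.cast_zero, zero_mul, mul_zero, zero_div, add_zero, zero_sub, zero_mul]
  rw [show p/2 = (p-2)/2 + 1 from by omega]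
  have key : Real.exp u * (-2 * ∑ m ∈ Finset.range ((p-2)/2 + 1),
        (harm m - u / 2) * Real.exp (m * u) * v ^ (p - 2 - 2*m) /
          ((Nat.factorial m : ℝ)^2 * (Nat.factorial (p-2-2*m) : ℝ)))
      = -2 * ∑ m ∈ Finset.range ((p-2)/2 + 1),
        Real.exp u * ((harm m - u / 2) * Real.exp (m * u) * v ^ (p - 2 - 2*m) /
          ((Nat.factorial m : ℝ)^2 * (Nat.factorial (p-2-2*m) : ℝ))) := by
    rw [← Finset.mul_sum]; ring
  rw [key]
  congr 1
  refine Finset.sum_congr rfl fun k hk => ?_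
  have hk' := Finset.mem_range.mp hk
  rw [harm_succ, Nat.factorial_succ, show p - 2*(k+1) = p - 2 - 2*k from by omega]
  have hkf : (Nat.factorial k : ℝ) ≠ 0 := Nat.cast_ne_zero.2 k.factorial_ne_zero
  have hpf : (Nat.factorial (p-2-2*k) : ℝ) ≠ 0 := Nat.cast_ne_zero.2 (p-2-2*k).factorial_ne_zero
  have hk1 : ((k:ℝ) + 1) ≠ 0 := by positivity
  push_cast
  rw [show ((k:ℝ)+1)*u = u + (k:ℝ)*u from by ring, Real.exp_add]
  field_simp
  ring


/-- The deformed flatness recursion for the functions `θ_{1,p}`, `p ≥ 1`: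
`∂²θ_{1,p}/∂u² = e^u ∂θ_{1,p−1}/∂v`, `∂²θ_{1,p}/∂u∂v = ∂θ_{1,p−1}/∂u`,
`∂²θ_{1,p}/∂v² = ∂θ_{1,p−1}/∂v`. -/
theorem theta1_deformed_flatness (p : ℕ) (hp : 1 ≤ p) (v u : ℝ) :
    du (du (theta1 p)) v u = Real.exp u * dv (theta1 (p - 1)) v u ∧
    du (dv (theta1 p)) v u = du (theta1 (p - 1)) v u ∧
    dv (dv (theta1 p)) v u = dv (theta1 (p - 1)) v u := by
  have hdvfun : dv (theta1 p) = theta1 (p - 1) :=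
    funext fun v' => funext fun u' => dv_theta1 p hp v' u'
  refine ⟨?_, ?_, ?_⟩
  · have h1 : (fun u' => du (theta1 p) v u') = fun u' => T1 p v u' :=
      funext fun u' => by rw [du, (hasDerivAt_theta1_u p v u').deriv]
    show deriv (fun u' => du (theta1 p) v u') u = _
    rw [h1, (hasDerivAt_T1_u p v u).deriv]
    rcases eq_or_lt_of_le hp with h | h
    · have hp1 : p = 1 := h.symm
      subst hp1
      norm_num [Finset.sum_range_one, dv, theta1]
    · have h2 : 2 ≤ p := h
      rw [dv_theta1 (p-1) (by omega) v u, show p - 1 - 1 = p - 2 from by omega]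
      exact sum2_eq p h2 v u
  · show deriv (fun u' => dv (theta1 p) v u') u = _
    rw [hdvfun]
    rfl
  · show deriv (fun v' => dv (theta1 p) v' u) v = _
    rw [hdvfun]
    rfl


end Toda
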